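/- Let k > 0, F > 0 and suppose 0 < Δ where Δ = 1 − 4Fγ², γ = (F+k)/F. Then the determinants of the Jacobian at the two nontrivial equilibria are det Df(p±) = F(Δ − √Δ)/(2γ) and det Df(p∓) = F(Δ + √Δ)/(2γ). Since automatically Δ < 1, it follows that det Df(p±) < 0 (so p± is a saddle point) and det Df(p∓) > 0. -/

import Mathlib

open Matrix

/-- For `0 < Δ = 1 − 4Fγ²` (with `γ = (F+k)/F`), the Jacobian determinants at the two
nontrivial equilibria are `det Df(p±) = F(Δ − √Δ)/(2γ)` and `det Df(p∓) = F(Δ + √Δ)/(2γ)`;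
since `Δ < 1`, `det Df(p±) < 0` (saddle) and `det Df(p∓) > 0`. -/
theorem grayScott_det_at_nontrivial_equilibria
    (k F : ℝ) (hk : 0 < k) (hF : 0 < F)
    (γ Δ : ℝ) (hγ : γ = (F + k) / F) (hΔ : Δ = 1 - 4 * F * γ ^ 2) (hΔpos : 0 < Δ)
    (Df : ℝ → ℝ → Matrix (Fin 2) (Fin 2) ℝ)
    (hDf : ∀ u v : ℝ, Df u v = !![-(F + v ^ 2), -2 * u * v; v ^ 2, 2 * u * v - (F + k)])
    (pp pm : ℝ × ℝ)
    (hpp : pp = ((1 + Real.sqrt Δ) / 2, (1 - Real.sqrt Δ) / (2 * γ)))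
    (hpm : pm = ((1 - Real.sqrt Δ) / 2, (1 + Real.sqrt Δ) / (2 * γ))) :
    (Df pp.1 pp.2).det = F * (Δ - Real.sqrt Δ) / (2 * γ) ∧
    (Df pm.1 pm.2).det = F * (Δ + Real.sqrt Δ) / (2 * γ) ∧
    Δ < 1 ∧
    (Df pp.1 pp.2).det < 0 ∧
    0 < (Df pm.1 pm.2).det := by
  have hγpos : 0 < γ := by
    rw [hγ]; positivity
  have hγF : γ * F = F + k := by
    rw [hγ]; field_simp
  have hs2 : Real.sqrt Δ ^ 2 = Δ := Real.sq_sqrt hΔpos.le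
  have hspos : 0 < Real.sqrt Δ := Real.sqrt_pos.mpr hΔpos
  have hΔ1 : Δ < 1 := by nlinarith [sq_nonneg γ]
  have hs1 : Real.sqrt Δ < 1 := by nlinarith
  have hΔs : Δ < Real.sqrt Δ := by nlinarith
  have hdet1 : (Df pp.1 pp.2).det = F * (Δ - Real.sqrt Δ) / (2 * γ) := by
    rw [hpp, hDf, Matrix.det_fin_two_of]
    have hkF : F + k = γ * F := hγF.symm
    have hFeq : F = (1 - Real.sqrt Δ ^ 2) / (4 * γ ^ 2) := by
      rw [hs2]
      field_simp
      linarith [hΔ]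
    rw [hkF, ← hs2, hFeq]
    have h2γ : (2 : ℝ) * γ ≠ 0 := by positivity
    field_simp
    linear_combination 24 * (1 - Real.sqrt Δ ^ 2) * (Real.sq_sqrt (sq_nonneg (Real.sqrt Δ)))
  have hdet2 : (Df pm.1 pm.2).det = F * (Δ + Real.sqrt Δ) / (2 * γ) := by
    rw [hpm, hDf, Matrix.det_fin_two_of]
    have hkF : F + k = γ * F := hγF.symm
    have hFeq : F = (1 - Real.sqrt Δ ^ 2) / (4 * γ ^ 2) := by
      rw [hs2]
      field_simp
      linarith [hΔ]
    rw [hkF, ← hs2, hFeq]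
    have h2γ : (2 : ℝ) * γ ≠ 0 := by positivity
    field_simp
    linear_combination 24 * (1 - Real.sqrt Δ ^ 2) * (Real.sq_sqrt (sq_nonneg (Real.sqrt Δ)))
  refine ⟨hdet1, hdet2, hΔ1, ?_, ?_⟩
  · rw [hdet1]
    apply div_neg_of_neg_of_pos
    · nlinarith
    · linarith
  · rw [hdet2]
    positivity
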